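/- For n ≥ 4 there exists q < 0 such that g(n)(1−q)² > 1 + q², where g(n) = (n² − 3n + 3)/(n(n−1)); hence there exist traceless A ∈ M_n(ℂ) and B ∈ M_n(ℂ) with ‖AB − qBA‖_F² > (1+q²)‖A‖_F²‖B‖_F². In contrast, for n ∈ {2,3}, g(n) = 1/2 and (1−q)²/2 ≤ 1 + q² for all q ≤ 0. -/

import Mathlib

open Matrix
open scoped BigOperators Matrix

noncomputable def frobSq {n : ℕ} (M : Matrix (Fin n) (Fin n) ℂ) : ℝ :=
  ∑ i, ∑ j, ‖M i j‖ ^ 2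

noncomputable def g (n : ℕ) : ℝ :=
  ((n : ℝ) ^ 2 - 3 * n + 3) / ((n : ℝ) * (n - 1))

lemma sum_ite_zero' {n : ℕ} [NeZero n] {R : Type*} [CommRing R] (a b : R) :
    ∑ i : Fin n, (if i = 0 then a else b) = a + ((n : R) - 1) * b := by
  have h : ∀ i : Fin n, (if i = 0 then a else b) = (if i = 0 then a - b else 0) + b := by
    intro i; split <;> ring
  rw [Finset.sum_congr rfl (fun i _ => h i), Finset.sum_add_distrib]
  simp [Finset.sum_ite_eq', Finset.card_univ, mul_comm]
  ring

lemma key_ineq (x : ℝ) (h1 : 1 / 2 < x) (h2 : x < 1) :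
    x * (1 - x / (x - 1)) ^ 2 > 1 + (x / (x - 1)) ^ 2 := by
  have hx : x - 1 ≠ 0 := sub_ne_zero.mpr (ne_of_lt h2)
  have hx2 : (0 : ℝ) < (x - 1) ^ 2 := by positivity
  rw [gt_iff_lt, ← sub_pos]
  have hid : x * (1 - x / (x - 1)) ^ 2 - (1 + (x / (x - 1)) ^ 2)
      = (2 * x - 1) * (1 - x) / (x - 1) ^ 2 := by
    field_simp; ring
  rw [hid]
  apply div_pos (by nlinarith) hx2

theorem stmt_19 {n : ℕ} (hn : 4 ≤ n) :
    (∃ q : ℝ, q < 0 ∧ g n * (1 - q) ^ 2 > 1 + q ^ 2 ∧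
      ∃ A B : Matrix (Fin n) (Fin n) ℂ, A.trace = 0 ∧ B.trace = 0 ∧
        frobSq (A * B - (q : ℂ) • (B * A)) > (1 + q ^ 2) * frobSq A * frobSq B) ∧
    g 2 = 1 / 2 ∧ g 3 = 1 / 2 ∧
    ∀ q : ℝ, q ≤ 0 → (1 - q) ^ 2 / 2 ≤ 1 + q ^ 2 := by
  haveI : NeZero n := ⟨by omega⟩
  have hN : (4 : ℝ) ≤ (n : ℝ) := by exact_mod_cast hn
  set N : ℝ := (n : ℝ) with hNdef
  have hden : 0 < N * (N - 1) := by nlinarith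
  have hg1 : 1 / 2 < g n := by
    rw [g, lt_div_iff₀ hden]; nlinarith
  have hg2 : g n < 1 := by
    rw [g, div_lt_one hden]; nlinarith
  set G : ℝ := g n with hG
  set q : ℝ := G / (G - 1) with hq
  have hqneg : q < 0 := by
    rw [hq]; apply div_neg_of_pos_of_neg <;> nlinarith
  have hgq : G * (1 - q) ^ 2 > 1 + q ^ 2 := key_ineq G hg1 hg2
  refine ⟨⟨q, hqneg, hgq, ?_⟩, ?_, ?_, ?_⟩
  · set e : Fin n → ℝ := fun i => if i = 0 then N - 1 else -1 with he
    set d : Fin n → ℂ := fun i => ((e i : ℝ) : ℂ) with hd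
    have hnorm : ∀ c : ℝ, ‖((c : ℝ) : ℂ)‖ ^ 2 = c ^ 2 := by
      intro c; rw [Complex.norm_real, Real.norm_eq_abs, sq_abs]
    refine ⟨Matrix.diagonal d, Matrix.diagonal d, ?_, ?_, ?_⟩
    · rw [Matrix.trace_diagonal]
      simp only [hd, he, apply_ite (Complex.ofReal)]
      rw [sum_ite_zero', hNdef]
      push_cast; ring
    · rw [Matrix.trace_diagonal]
      simp only [hd, he, apply_ite (Complex.ofReal)]
      rw [sum_ite_zero', hNdef]
      push_cast; ring
    · have hAB : frobSq (Matrix.diagonal d * Matrix.diagonal d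
          - (q : ℂ) • (Matrix.diagonal d * Matrix.diagonal d))
          = (1 - q) ^ 2 * ((N - 1) ^ 4 + (N - 1)) := by
        rw [frobSq]
        have hterm : ∀ i j : Fin n,
            ‖(Matrix.diagonal d * Matrix.diagonal d
              - (q : ℂ) • (Matrix.diagonal d * Matrix.diagonal d)) i j‖ ^ 2
            = if i = j then ((1 - q) * e i ^ 2) ^ 2 else 0 := by
          intro i j
          have hentry : (Matrix.diagonal d * Matrix.diagonal d
              - (q : ℂ) • (Matrix.diagonal d * Matrix.diagonal d)) i j
              = (((if i = j then (1 - q) * e i ^ 2 else 0 : ℝ)) : ℂ) := by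
            simp only [Matrix.diagonal_mul_diagonal, Matrix.sub_apply, Matrix.smul_apply,
              Matrix.diagonal_apply, Pi.mul_apply, smul_eq_mul, hd]
            by_cases h : i = j <;> simp [h] <;> push_cast <;> ring
          rw [hentry, hnorm]
          by_cases h : i = j <;> simp [h]
        rw [Finset.sum_congr rfl (fun i _ => Finset.sum_congr rfl (fun j _ => hterm i j))]
        rw [Finset.sum_congr rfl (fun i _ => Finset.sum_ite_eq (Finset.univ) i
          (fun _ => ((1 - q) * e i ^ 2) ^ 2))]
        simp only [Finset.mem_univ, if_true]
        have h2 : ∀ i : Fin n, ((1 - q) * e i ^ 2) ^ 2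
            = if i = 0 then (1 - q) ^ 2 * (N - 1) ^ 4 else (1 - q) ^ 2 := by
          intro i; rw [he]; by_cases h : i = 0 <;> simp [h] <;> ring
        rw [Finset.sum_congr rfl (fun i _ => h2 i), sum_ite_zero']
        ring
      have hA : frobSq (Matrix.diagonal d) = N * (N - 1) := by
        rw [frobSq]
        have hterm : ∀ i j : Fin n, ‖(Matrix.diagonal d) i j‖ ^ 2
            = if i = j then e i ^ 2 else 0 := by
          intro i j
          have hentry : (Matrix.diagonal d) i j = (((if i = j then e i else 0 : ℝ)) : ℂ) := by
            rw [Matrix.diagonal_apply, hd]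
            by_cases h : i = j <;> simp [h]
          rw [hentry, hnorm]
          by_cases h : i = j <;> simp [h]
        rw [Finset.sum_congr rfl (fun i _ => Finset.sum_congr rfl (fun j _ => hterm i j))]
        rw [Finset.sum_congr rfl (fun i _ => Finset.sum_ite_eq (Finset.univ) i
          (fun _ => e i ^ 2))]
        simp only [Finset.mem_univ, if_true]
        have h2 : ∀ i : Fin n, e i ^ 2 = if i = 0 then (N - 1) ^ 2 else 1 := by
          intro i; rw [he]; by_cases h : i = 0 <;> simp [h]
        rw [Finset.sum_congr rfl (fun i _ => h2 i), sum_ite_zero']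
        ring
      rw [hAB, hA]
      have hGdef : G * (N * (N - 1)) = N ^ 2 - 3 * N + 3 := by
        rw [hG, g, div_mul_cancel₀]
        exact ne_of_gt hden
      have step : (1 + q ^ 2) * (N * (N - 1)) < G * (1 - q) ^ 2 * (N * (N - 1)) :=
        (mul_lt_mul_iff_of_pos_right hden).mpr hgq
      calc (1 + q ^ 2) * (N * (N - 1)) * (N * (N - 1))
          < G * (1 - q) ^ 2 * (N * (N - 1)) * (N * (N - 1)) :=
            (mul_lt_mul_iff_of_pos_right hden).mpr step
        _ = (1 - q) ^ 2 * ((N - 1) ^ 4 + (N - 1)) := by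
            rw [show G * (1 - q) ^ 2 * (N * (N - 1)) * (N * (N - 1))
              = (1 - q) ^ 2 * (G * (N * (N - 1)) * (N * (N - 1))) by ring, hGdef]
            ring
  · rw [g]; norm_num
  · rw [g]; norm_num
  · intro q hq; nlinarith [sq_nonneg (1 + q)]
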